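/- Let v be a unit vector in ℂ^{d_B}⊗ℂ^{d_C} with Schmidt coefficients s_1, …, s_m where m = min(d_B, d_C), and let P = |v⟩⟨v| be the orthogonal projection onto v. Then the multiset of eigenvalues (with multiplicity) of the partial transpose P^Γ consists of: s_k² for each k = 1,…,m; +s_k s_l and −s_k s_l for each pair 1 ≤ k < l ≤ m; and 0 with multiplicity d_B·d_C − m². -/

import Mathlib

open scoped BigOperators
open Matrix Polynomial

noncomputable section

/-- Partial transpose over the second tensor factor. -/
def ptranspose {d d' : ℕ} (M : Matrix (Fin d × Fin d') (Fin d × Fin d') ℂ) :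
    Matrix (Fin d × Fin d') (Fin d × Fin d') ℂ :=
  fun p q => M (p.1, q.2) (q.1, p.2)

/-- Orthogonal projection onto a vector: `(|v⟩⟨v|)_{i j} = v i * conj (v j)`. -/
def proj {n : Type*} [Fintype n] (v : n → ℂ) : Matrix n n ℂ :=
  Matrix.vecMulVec v (star v)

lemma my_charpoly_diagonal {n : Type*} [Fintype n] [DecidableEq n] (d : n → ℂ) :
    (Matrix.diagonal d).charpoly = ∏ i, (X - C (d i)) := by
  have : charmatrix (Matrix.diagonal d) = Matrix.diagonal (fun i => (X : ℂ[X]) - C (d i)) := by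
    ext i j
    by_cases h : i = j
    · subst h; simp [charmatrix_apply_eq]
    · simp [charmatrix_apply_ne _ _ _ h, Matrix.diagonal_apply_ne _ h]
  rw [Matrix.charpoly, this, Matrix.det_diagonal]

lemma my_charpoly_conj {n : Type*} [Fintype n] [DecidableEq n] (U A : Matrix n n ℂ)
    (hU : star U * U = 1) : (U * A * star U).charpoly = A.charpoly := by
  have hU' : U * star U = 1 := mul_eq_one_comm.mp hU
  have hch : ∀ M : Matrix n n ℂ,
      charmatrix M = Matrix.diagonal (fun _ : n => (X : ℂ[X])) - M.map C := by
    intro M; ext i j; rw [charmatrix_apply]; simp [Matrix.sub_apply]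
  have hcomm : U.map C * Matrix.diagonal (fun _ : n => (X : ℂ[X]))
      = Matrix.diagonal (fun _ : n => (X : ℂ[X])) * U.map C := by
    apply Matrix.ext; intro i j
    rw [Matrix.mul_apply, Matrix.mul_apply]
    simp only [Matrix.diagonal_apply, Matrix.map_apply, mul_ite, ite_mul, mul_zero, zero_mul,
      Finset.sum_ite_eq, Finset.sum_ite_eq', Finset.mem_univ, if_true]
    exact mul_comm _ _
  have key : charmatrix (U * A * star U) = U.map C * charmatrix A * (star U).map C := by
    rw [hch, hch, mul_sub, sub_mul]
    congr 1
    · rw [hcomm, mul_assoc, ← Matrix.map_mul, hU',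
        Matrix.map_one _ (map_zero C) (map_one C), mul_one]
    · rw [← Matrix.map_mul, ← Matrix.map_mul]
  have hdet1 : (U.map C).det * ((star U).map C).det = 1 := by
    rw [← Matrix.det_mul, ← Matrix.map_mul, hU',
      Matrix.map_one _ (map_zero C) (map_one C), Matrix.det_one]
  rw [Matrix.charpoly, key, Matrix.det_mul, Matrix.det_mul, Matrix.charpoly]
  calc (U.map C).det * (charmatrix A).det * ((star U).map C).det
      = (U.map C).det * ((star U).map C).det * (charmatrix A).det := by ring
    _ = (charmatrix A).det := by rw [hdet1, one_mul]

lemma my_eig_multiset {n : Type*} [Fintype n] [DecidableEq n] {A : Matrix n n ℂ}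
    (hA : A.IsHermitian) (U : Matrix n n ℂ) (hU : star U * U = 1) (d : n → ℝ)
    (hAU : A = U * Matrix.diagonal (fun i => (d i : ℂ)) * star U) :
    Finset.univ.val.map hA.eigenvalues = Finset.univ.val.map d := by
  have h1 : A.charpoly = ∏ i, (X - C ((hA.eigenvalues i : ℂ))) := by
    conv_lhs => rw [hA.spectral_theorem]
    rw [Unitary.conjStarAlgAut_apply]
    rw [my_charpoly_conj _ _ ((hA.eigenvectorUnitary).2).1, my_charpoly_diagonal]
    norm_num
  have h2 : A.charpoly = ∏ i, (X - C ((d i : ℂ))) := by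
    conv_lhs => rw [hAU]
    rw [my_charpoly_conj _ _ hU, my_charpoly_diagonal]
  have h3 : (Finset.univ.val.map (fun i => ((hA.eigenvalues i : ℝ) : ℂ)))
      = Finset.univ.val.map (fun i => ((d i : ℝ) : ℂ)) := by
    have e1 := Polynomial.roots_multiset_prod_X_sub_C
      (Finset.univ.val.map fun i => ((hA.eigenvalues i : ℝ) : ℂ))
    have e2 := Polynomial.roots_multiset_prod_X_sub_C
      (Finset.univ.val.map fun i => ((d i : ℝ) : ℂ))
    rw [Multiset.map_map] at e1 e2
    have hms : ∀ g : n → ℂ, (Finset.univ.val.map fun i => ((fun a => X - C a) ∘ g) i).prod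
        = ∏ i, (X - C (g i)) := fun g => (Finset.prod_eq_multiset_prod _ _).symm
    rw [hms] at e1 e2
    rw [← e1, ← e2, ← h1, ← h2]
  have h4 : ((Finset.univ.val.map hA.eigenvalues).map (fun x : ℝ => (x : ℂ)))
      = (Finset.univ.val.map d).map (fun x : ℝ => (x : ℂ)) := by
    rw [Multiset.map_map, Multiset.map_map]; exact h3
  exact Multiset.map_injective Complex.ofReal_injective h4

theorem eigenvalues_ptranspose_of_pure
    (dB dC m : ℕ) (hdB : 0 < dB) (hdC : 0 < dC) (hm : m = min dB dC)
    (v : Fin dB × Fin dC → ℂ)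
    (hv_unit : ∑ p : Fin dB × Fin dC, ‖v p‖ ^ 2 = 1)
    (s : Fin m → ℝ) (e : Fin m → Fin dB → ℂ) (f : Fin m → Fin dC → ℂ)
    (hs : ∀ k, 0 ≤ s k)
    (he : ∀ k l, ∑ b : Fin dB, (starRingEnd ℂ) (e k b) * e l b = if k = l then 1 else 0)
    (hf : ∀ k l, ∑ c : Fin dC, (starRingEnd ℂ) (f k c) * f l c = if k = l then 1 else 0)
    (hv : ∀ b c, v (b, c) = ∑ k : Fin m, (s k : ℂ) * e k b * f k c)
    (hH : (ptranspose (proj v)).IsHermitian) :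
    (Finset.univ.val.map hH.eigenvalues) =
      (Finset.univ.val.map fun k : Fin m => s k ^ 2)
        + ((Finset.univ.filter (fun p : Fin m × Fin m => p.1 < p.2)).val.map
            fun p : Fin m × Fin m => s p.1 * s p.2)
        + ((Finset.univ.filter (fun p : Fin m × Fin m => p.1 < p.2)).val.map
            fun p : Fin m × Fin m => -(s p.1 * s p.2))
        + Multiset.replicate (dB * dC - m ^ 2) (0 : ℝ) := by
  classical
  have hmB : m ≤ dB := hm ▸ min_le_left _ _
  have hmC : m ≤ dC := hm ▸ min_le_right _ _
  set M := ptranspose (proj v) with hM_def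
  -- the `g` family
  set g : Fin m × Fin m → EuclideanSpace ℂ (Fin dB × Fin dC) :=
    fun a => WithLp.toLp 2 (fun p : Fin dB × Fin dC => e a.1 p.1 * (starRingEnd ℂ) (f a.2 p.2)) with hg_def
  have hfconj : ∀ k l : Fin m,
      (∑ c, f k c * (starRingEnd ℂ) (f l c)) = if k = l then 1 else 0 := by
    intro k l
    have h := congrArg (starRingEnd ℂ) (hf k l)
    simpa only [map_sum, _root_.map_mul, Complex.conj_conj, apply_ite (starRingEnd ℂ),
      _root_.map_one, _root_.map_zero] using h
  have hg_inner : ∀ a b : Fin m × Fin m,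
      (inner ℂ (g a) (g b) : ℂ) = if a = b then 1 else 0 := by
    intro a b
    have step1 : (inner ℂ (g a) (g b) : ℂ)
        = (∑ b', (starRingEnd ℂ) (e a.1 b') * e b.1 b')
            * (∑ c', f a.2 c' * (starRingEnd ℂ) (f b.2 c')) := by
      rw [PiLp.inner_apply, Fintype.sum_prod_type, Finset.sum_mul_sum]
      apply Finset.sum_congr rfl
      intro i _
      apply Finset.sum_congr rfl
      intro j _
      simp only [hg_def, RCLike.inner_apply, _root_.map_mul, Complex.conj_conj]
      ring
    rw [step1, he, hfconj]
    by_cases h1 : a.1 = b.1 <;> by_cases h2 : a.2 = b.2 <;>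
      simp [h1, h2, Prod.ext_iff]
  -- rank-one decomposition of M
  have hMsum : M = ∑ a : Fin m × Fin m, (((s a.1 : ℂ) * (s a.2 : ℂ)))
      • Matrix.vecMulVec (g a : Fin dB × Fin dC → ℂ)
          (star (g (a.2, a.1) : Fin dB × Fin dC → ℂ)) := by
    apply Matrix.ext
    rintro ⟨b, c⟩ ⟨b', c'⟩
    have hL : M (b, c) (b', c') = v (b, c') * (starRingEnd ℂ) (v (b', c)) := rfl
    rw [hL, hv, hv, map_sum, Finset.sum_mul_sum, Matrix.sum_apply, Fintype.sum_prod_type]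
    apply Finset.sum_congr rfl
    intro k _
    apply Finset.sum_congr rfl
    intro l _
    simp only [Matrix.smul_apply, Matrix.vecMulVec_apply, Pi.star_apply, hg_def, smul_eq_mul,
      Complex.star_def, _root_.map_mul, Complex.conj_conj, Complex.conj_ofReal]
    ring
  -- mulVec formula
  have hMv : ∀ x : Fin dB × Fin dC → ℂ,
      M *ᵥ x = ∑ a : Fin m × Fin m,
        (((s a.1 : ℂ) * (s a.2 : ℂ))
            * ∑ p, (starRingEnd ℂ) (g (a.2, a.1) p) * x p) • (g a : Fin dB × Fin dC → ℂ) := by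
    intro x
    funext p
    have hL : (M *ᵥ x) p = ∑ q, M p q * x q := rfl
    rw [hL, hMsum]
    simp only [Matrix.sum_apply, Matrix.smul_apply, Matrix.vecMulVec_apply, smul_eq_mul,
      Pi.star_apply, Finset.sum_mul]
    rw [Finset.sum_comm, Finset.sum_apply]
    apply Finset.sum_congr rfl
    intro a _
    rw [Pi.smul_apply, smul_eq_mul, Finset.mul_sum, Finset.sum_mul]
    apply Finset.sum_congr rfl
    intro q _
    simp only [Complex.star_def]
    ring
  have hMg : ∀ a : Fin m × Fin m,
      M *ᵥ (g a : Fin dB × Fin dC → ℂ)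
        = (((s a.1 : ℂ) * (s a.2 : ℂ))) • (g (a.2, a.1) : Fin dB × Fin dC → ℂ) := by
    intro a
    rw [hMv]
    have hdp : ∀ u x : Fin m × Fin m,
        (∑ p, (starRingEnd ℂ) (g u p) * (g x : Fin dB × Fin dC → ℂ) p)
          = if u = x then 1 else 0 := by
      intro u x
      rw [← hg_inner u x, PiLp.inner_apply]
      simp only [RCLike.inner_apply']
    rw [Finset.sum_eq_single (a.2, a.1)]
    · rw [hdp]
      simp [mul_comm]
    · intro b _ hb
      rw [hdp]
      rw [if_neg]
      · simp
      · intro hcon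
        apply hb
        rw [← hcon]
    · intro h
      exact absurd (Finset.mem_univ _) h
  -- the `w` family
  obtain ⟨c2, hc2_def⟩ : ∃ c : ℂ, c = (((Real.sqrt 2 : ℝ) : ℂ))⁻¹ := ⟨_, rfl⟩
  set w : Fin m × Fin m → EuclideanSpace ℂ (Fin dB × Fin dC) := fun a =>
    if a.1 = a.2 then g a
    else if a.1 < a.2 then c2 • (g a + g (a.2, a.1))
    else c2 • (g a - g (a.2, a.1)) with hw_def
  set lam : Fin m × Fin m → ℝ := fun a =>
    if a.1 = a.2 then s a.1 ^ 2
    else if a.1 < a.2 then s a.1 * s a.2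
    else -(s a.1 * s a.2) with hlam_def
  have hc2conj : (starRingEnd ℂ) c2 = c2 := by
    rw [hc2_def, map_inv₀, Complex.conj_ofReal]
  have hc22 : c2 * c2 * 2 = 1 := by
    rw [hc2_def, ← mul_inv, ← Complex.ofReal_mul,
      Real.mul_self_sqrt (by norm_num : (0:ℝ) ≤ 2)]
    norm_num
  have hwlt : ∀ a : Fin m × Fin m, a.1 < a.2 → w a = c2 • (g a + g (a.2, a.1)) := by
    intro a h
    rw [hw_def]
    simp only
    rw [if_neg (ne_of_lt h), if_pos h]
  have hweq : ∀ a : Fin m × Fin m, a.1 = a.2 → w a = g a := by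
    intro a h
    rw [hw_def]
    simp only
    rw [if_pos h]
  have hwgt : ∀ a : Fin m × Fin m, a.2 < a.1 → w a = c2 • (g a - g (a.2, a.1)) := by
    intro a h
    rw [hw_def]
    simp only
    rw [if_neg (ne_of_gt h), if_neg (asymm h)]
  have hswap_ne : ∀ a b : Fin m × Fin m, a ≠ b → (a.2, a.1) ≠ (b.2, b.1) := by
    intro a b hab h
    apply hab
    rw [Prod.ext_iff] at h ⊢
    exact ⟨h.2, h.1⟩
  have hw_on : Orthonormal ℂ w := by
    rw [orthonormal_iff_ite]
    intro a b
    rcases lt_trichotomy a.1 a.2 with h1 | h1 | h1 <;>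
      rcases lt_trichotomy b.1 b.2 with h2 | h2 | h2
    · -- lt lt
      rw [hwlt a h1, hwlt b h2]
      simp only [inner_smul_left, inner_smul_right, inner_add_left, inner_add_right,
        hg_inner, hc2conj]
      have n1 : a ≠ (b.2, b.1) := by rintro rfl; exact absurd h2 (asymm h1)
      have n2 : (a.2, a.1) ≠ b := by rintro rfl; exact absurd h1 (asymm h2)
      by_cases hab : a = b
      · subst hab
        simp [n1, n2]
        linear_combination hc22
      · have n3 : (a.2, a.1) ≠ (b.2, b.1) := hswap_ne a b hab
        simp [hab, n1, n2, n3]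
    · -- lt eq
      rw [hwlt a h1, hweq b h2]
      simp only [inner_smul_left, inner_add_left, hg_inner, hc2conj]
      have hab : a ≠ b := by rintro rfl; exact absurd h2 (ne_of_lt h1)
      have n2 : (a.2, a.1) ≠ b := by rintro rfl; exact absurd h2 (ne_of_gt h1)
      simp [hab, n2]
    · -- lt gt
      rw [hwlt a h1, hwgt b h2]
      simp only [inner_smul_left, inner_smul_right, inner_add_left, inner_sub_right,
        hg_inner, hc2conj]
      have hab : a ≠ b := by rintro rfl; exact absurd h2 (asymm h1)
      have n4 : (a.2, a.1) ≠ (b.2, b.1) := by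
        intro h
        have e1 : a.2 = b.2 := congrArg Prod.fst h
        have e2 : a.1 = b.1 := congrArg Prod.snd h
        have : b.1 < b.2 := by rw [← e2, ← e1]; exact h1
        exact absurd this (asymm h2)
      have hiff : ((a.2, a.1) = b) ↔ (a = (b.2, b.1)) := by
        constructor
        · intro h; rw [← h]
        · intro h; rw [h]
      have hbb : (b.2, b.1) ≠ b := by
        intro h
        exact absurd (congrArg Prod.fst h : b.2 = b.1) (ne_of_lt h2)
      by_cases hx : a = (b.2, b.1)
      · have hx' : (a.2, a.1) = b := hiff.mpr hx
        simp [hab, n4, hx, hx', hbb, Ne.symm hbb]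
      · have hx' : (a.2, a.1) ≠ b := fun h => hx (hiff.mp h)
        simp [hab, hx, hx', n4]
    · -- eq lt
      rw [hweq a h1, hwlt b h2]
      simp only [inner_smul_right, inner_add_right, hg_inner]
      have hab : a ≠ b := by rintro rfl; exact absurd (h1 ▸ h2) (lt_irrefl _)
      have n2 : a ≠ (b.2, b.1) := by rintro rfl; exact absurd h1.symm (ne_of_lt h2)
      simp [hab, n2]
    · -- eq eq
      rw [hweq a h1, hweq b h2]
      exact hg_inner a b
    · -- eq gt
      rw [hweq a h1, hwgt b h2]
      simp only [inner_smul_right, inner_sub_right, hg_inner]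
      have hab : a ≠ b := by
        rintro rfl; exact absurd h2 (by rw [h1]; exact lt_irrefl _)
      have n2 : a ≠ (b.2, b.1) := by rintro rfl; exact absurd h1 (ne_of_lt h2)
      simp [hab, n2]
    · -- gt lt
      rw [hwgt a h1, hwlt b h2]
      simp only [inner_smul_left, inner_smul_right, inner_add_right, inner_sub_left,
        hg_inner, hc2conj]
      have hab : a ≠ b := by rintro rfl; exact absurd h2 (asymm h1)
      have n4 : (a.2, a.1) ≠ (b.2, b.1) := by
        intro h
        have e1 : a.2 = b.2 := congrArg Prod.fst h
        have e2 : a.1 = b.1 := congrArg Prod.snd h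
        have : b.2 < b.1 := by rw [← e1, ← e2]; exact h1
        exact absurd this (asymm h2)
      have hiff : ((a.2, a.1) = b) ↔ (a = (b.2, b.1)) := by
        constructor
        · intro h; rw [← h]
        · intro h; rw [h]
      have hbb : (b.2, b.1) ≠ b := by
        intro h
        exact absurd (congrArg Prod.fst h : b.2 = b.1) (ne_of_gt h2)
      by_cases hx : a = (b.2, b.1)
      · have hx' : (a.2, a.1) = b := hiff.mpr hx
        simp [hab, n4, hx, hx', hbb, Ne.symm hbb]
      · have hx' : (a.2, a.1) ≠ b := fun h => hx (hiff.mp h)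
        simp [hab, hx, hx', n4]
    · -- gt eq
      rw [hwgt a h1, hweq b h2]
      simp only [inner_smul_left, inner_sub_left, hg_inner, hc2conj]
      have hab : a ≠ b := by rintro rfl; exact absurd h2 (ne_of_gt h1)
      have n2 : (a.2, a.1) ≠ b := by rintro rfl; exact absurd h2 (ne_of_lt h1)
      simp [hab, n2]
    · -- gt gt
      rw [hwgt a h1, hwgt b h2]
      simp only [inner_smul_left, inner_smul_right, inner_sub_left, inner_sub_right,
        hg_inner, hc2conj]
      have n1 : a ≠ (b.2, b.1) := by rintro rfl; exact absurd h2 (asymm h1)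
      have n2 : (a.2, a.1) ≠ b := by rintro rfl; exact absurd h1 (asymm h2)
      by_cases hab : a = b
      · subst hab
        simp [n1, n2]
        linear_combination hc22
      · have n3 : (a.2, a.1) ≠ (b.2, b.1) := hswap_ne a b hab
        simp [hab, n1, n2, n3]
  have hMw : ∀ a : Fin m × Fin m,
      M *ᵥ (w a : Fin dB × Fin dC → ℂ)
        = ((lam a : ℝ) : ℂ) • (w a : Fin dB × Fin dC → ℂ) := by
    intro a
    rcases lt_trichotomy a.1 a.2 with h1 | h1 | h1
    · have hlam : lam a = s a.1 * s a.2 := by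
        rw [hlam_def]; simp only; rw [if_neg (ne_of_lt h1), if_pos h1]
      rw [hwlt a h1, hlam, WithLp.ofLp_smul, WithLp.ofLp_add, Matrix.mulVec_smul, Matrix.mulVec_add, hMg a, hMg (a.2, a.1)]
      push_cast
      match_scalars <;> ring
    · have hlam : lam a = s a.1 ^ 2 := by
        rw [hlam_def]; simp only; rw [if_pos h1]
      obtain ⟨k, l⟩ := a
      simp only at h1
      subst h1
      rw [hweq (k, k) rfl, hlam, hMg (k, k)]
      push_cast
      match_scalars <;> ring
    · have hlam : lam a = -(s a.1 * s a.2) := by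
        rw [hlam_def]; simp only; rw [if_neg (ne_of_gt h1), if_neg (asymm h1)]
      rw [hwgt a h1, hlam, WithLp.ofLp_smul, WithLp.ofLp_sub, Matrix.mulVec_smul, Matrix.mulVec_sub, hMg a, hMg (a.2, a.1)]
      push_cast
      match_scalars <;> ring
  have hg_w : ∀ a : Fin m × Fin m, (g a : EuclideanSpace ℂ (Fin dB × Fin dC))
      = if a.1 = a.2 then w a
        else if a.1 < a.2 then c2 • (w a - w (a.2, a.1))
        else c2 • (w a + w (a.2, a.1)) := by
    intro a
    rcases lt_trichotomy a.1 a.2 with h1 | h1 | h1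
    · rw [if_neg (ne_of_lt h1), if_pos h1, hwlt a h1,
        hwgt (a.2, a.1) (show (a.2, a.1).2 < (a.2, a.1).1 from h1)]
      rw [← smul_sub, smul_smul]
      have h2 : (g a + g (a.2, a.1)) - (g (a.2, a.1) - g a)
          = (2 : ℂ) • (g a : EuclideanSpace ℂ (Fin dB × Fin dC)) := by
        rw [two_smul]; abel
      rw [h2, smul_smul, hc22, one_smul]
    · rw [if_pos h1, hweq a h1]
    · rw [if_neg (ne_of_gt h1), if_neg (asymm h1), hwgt a h1,
        hwlt (a.2, a.1) (show (a.2, a.1).1 < (a.2, a.1).2 from h1)]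
      rw [← smul_add, smul_smul]
      have h2 : (g a - g (a.2, a.1)) + (g (a.2, a.1) + g a)
          = (2 : ℂ) • (g a : EuclideanSpace ℂ (Fin dB × Fin dC)) := by
        rw [two_smul]; abel
      rw [h2, smul_smul, hc22, one_smul]
  -- extend to an orthonormal basis
  set v0 : Fin dB × Fin dC → EuclideanSpace ℂ (Fin dB × Fin dC) :=
    fun p => if h : p.1.val < m ∧ p.2.val < m then w (⟨p.1.val, h.1⟩, ⟨p.2.val, h.2⟩) else 0
    with hv0_def
  set S : Set (Fin dB × Fin dC) := {p | p.1.val < m ∧ p.2.val < m} with hS_def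
  have hv0_on : Orthonormal ℂ (S.restrict v0) := by
    rw [orthonormal_iff_ite]
    rintro ⟨p, hp⟩ ⟨q, hq⟩
    have hp' : p.1.val < m ∧ p.2.val < m := hp
    have hq' : q.1.val < m ∧ q.2.val < m := hq
    show (inner ℂ (v0 p) (v0 q) : ℂ) = _
    have hv0p : v0 p = w (⟨p.1.val, hp'.1⟩, ⟨p.2.val, hp'.2⟩) := by
      rw [hv0_def]; simp only; rw [dif_pos hp']
    have hv0q : v0 q = w (⟨q.1.val, hq'.1⟩, ⟨q.2.val, hq'.2⟩) := by
      rw [hv0_def]; simp only; rw [dif_pos hq']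
    rw [hv0p, hv0q, orthonormal_iff_ite.mp hw_on]
    by_cases hpq : p = q
    · subst hpq
      simp
    · have hne : ((⟨p.1.val, hp'.1⟩, ⟨p.2.val, hp'.2⟩) : Fin m × Fin m)
          ≠ (⟨q.1.val, hq'.1⟩, ⟨q.2.val, hq'.2⟩) := by
        intro h
        apply hpq
        have e0 : (⟨p.1.val, hp'.1⟩ : Fin m) = ⟨q.1.val, hq'.1⟩ := congrArg Prod.fst h
        have e0' : (⟨p.2.val, hp'.2⟩ : Fin m) = ⟨q.2.val, hq'.2⟩ := congrArg Prod.snd h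
        have e1v := congrArg Fin.val e0
        have e2v := congrArg Fin.val e0'
        have e1 : p.1 = q.1 := Fin.ext e1v
        have e2 : p.2 = q.2 := Fin.ext e2v
        exact Prod.ext e1 e2
      have hne2 : (⟨p, hp⟩ : S) ≠ ⟨q, hq⟩ := by
        intro h
        exact hpq (congrArg Subtype.val h)
      rw [if_neg hne, if_neg hne2]
  obtain ⟨B, hB⟩ := hv0_on.exists_orthonormalBasis_extension_of_card_eq
    (finrank_euclideanSpace (𝕜 := ℂ) (ι := Fin dB × Fin dC))
  set D : Fin dB × Fin dC → ℝ := fun p =>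
    if h : p.1.val < m ∧ p.2.val < m then lam (⟨p.1.val, h.1⟩, ⟨p.2.val, h.2⟩) else 0
    with hD_def
  have hinner_sum : ∀ (u : Fin m × Fin m) (x : EuclideanSpace ℂ (Fin dB × Fin dC)),
      (inner ℂ (g u) x : ℂ) = ∑ p, (starRingEnd ℂ) (g u p) * x p := by
    intro u x
    rw [PiLp.inner_apply]
    simp only [RCLike.inner_apply']
  have hBD : ∀ q : Fin dB × Fin dC,
      M *ᵥ (B q : Fin dB × Fin dC → ℂ) = ((D q : ℝ) : ℂ) • (B q : Fin dB × Fin dC → ℂ) := by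
    intro q
    by_cases hq : q.1.val < m ∧ q.2.val < m
    · have hBq : B q = v0 q := hB q hq
      have hDq : D q = lam (⟨q.1.val, hq.1⟩, ⟨q.2.val, hq.2⟩) := by
        rw [hD_def]; simp only; rw [dif_pos hq]
      have hv0q : v0 q = w (⟨q.1.val, hq.1⟩, ⟨q.2.val, hq.2⟩) := by
        rw [hv0_def]; simp only; rw [dif_pos hq]
      rw [hBq, hDq, hv0q]
      exact hMw _
    · have hDq : D q = 0 := by
        rw [hD_def]; simp only; rw [dif_neg hq]
      rw [hDq]
      have hworth : ∀ a : Fin m × Fin m,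
          (inner ℂ (w a) (B q : EuclideanSpace ℂ (Fin dB × Fin dC)) : ℂ) = 0 := by
        intro a
        have hpa1 : a.1.val < dB := lt_of_lt_of_le a.1.isLt hmB
        have hpa2 : a.2.val < dC := lt_of_lt_of_le a.2.isLt hmC
        set pa : Fin dB × Fin dC := (⟨a.1.val, hpa1⟩, ⟨a.2.val, hpa2⟩) with hpa_def
        have hpa : pa.1.val < m ∧ pa.2.val < m := ⟨a.1.isLt, a.2.isLt⟩
        have hBpa : B pa = v0 pa := hB pa hpa
        have hv0pa : v0 pa = w a := by
          rw [hv0_def]; simp only; rw [dif_pos hpa]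
        have hne : pa ≠ q := by intro h; exact hq (h ▸ hpa)
        have horth := orthonormal_iff_ite.mp B.orthonormal pa q
        rw [if_neg hne] at horth
        rw [← hv0pa, ← hBpa]
        exact horth
      have hgorth : ∀ a : Fin m × Fin m,
          (inner ℂ (g a) (B q : EuclideanSpace ℂ (Fin dB × Fin dC)) : ℂ) = 0 := by
        intro a
        rw [hg_w a]
        split_ifs with h1 h2
        · exact hworth a
        · rw [inner_smul_left, inner_sub_left, hworth, hworth]; simp
        · rw [inner_smul_left, inner_add_left, hworth, hworth]; simp
      have hcoef : ∀ a : Fin m × Fin m,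
          (∑ p, (starRingEnd ℂ) (g (a.2, a.1) p) * (B q : Fin dB × Fin dC → ℂ) p) = 0 := by
        intro a
        rw [← hinner_sum, hgorth]
      rw [hMv]
      simp [hcoef]
  -- matrix form
  set U : Matrix (Fin dB × Fin dC) (Fin dB × Fin dC) ℂ := Matrix.of (fun p q => B q p) with hU_def
  have hUunit : star U * U = 1 := by
    apply Matrix.ext; intro p q
    rw [Matrix.mul_apply, Matrix.one_apply]
    have horth := orthonormal_iff_ite.mp B.orthonormal p q
    rw [PiLp.inner_apply] at horth
    calc ∑ r, (star U) p r * U r q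
        = ∑ r, (starRingEnd ℂ) ((B p : Fin dB × Fin dC → ℂ) r) * (B q : Fin dB × Fin dC → ℂ) r := by
          apply Finset.sum_congr rfl
          intro r _
          rw [Matrix.star_apply, hU_def]
          rfl
      _ = if p = q then 1 else 0 := by rw [← horth]; simp only [RCLike.inner_apply']
  have hMU : M = U * Matrix.diagonal (fun p => ((D p : ℝ) : ℂ)) * star U := by
    have hMU' : M * U = U * Matrix.diagonal (fun p => ((D p : ℝ) : ℂ)) := by
      apply Matrix.ext; intro p q
      rw [Matrix.mul_apply, Matrix.mul_apply]
      have h2 : ∑ r, M p r * (B q : Fin dB × Fin dC → ℂ) r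
          = ((D q : ℝ) : ℂ) * (B q : Fin dB × Fin dC → ℂ) p := congrFun (hBD q) p
      calc ∑ r, M p r * U r q = ∑ r, M p r * (B q : Fin dB × Fin dC → ℂ) r := rfl
        _ = ((D q : ℝ) : ℂ) * (B q : Fin dB × Fin dC → ℂ) p := h2
        _ = ∑ r, U p r * Matrix.diagonal (fun p => ((D p : ℝ) : ℂ)) r q := by
            simp only [Matrix.diagonal_apply, mul_ite, mul_zero]
            rw [Finset.sum_ite_eq' Finset.univ q]
            simp only [Finset.mem_univ, if_true, hU_def, Matrix.of_apply]
            ring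
    calc M = M * 1 := by rw [mul_one]
      _ = M * (U * star U) := by rw [mul_eq_one_comm.mp hUunit]
      _ = (M * U) * star U := by rw [mul_assoc]
      _ = U * Matrix.diagonal (fun p => ((D p : ℝ) : ℂ)) * star U := by rw [hMU']
  have hmain : Finset.univ.val.map hH.eigenvalues = Finset.univ.val.map D :=
    my_eig_multiset hH U hUunit D hMU
  rw [hmain]
  -- multiset combinatorics
  set inc : Fin m × Fin m → Fin dB × Fin dC := fun a =>
    (⟨a.1.val, lt_of_lt_of_le a.1.isLt hmB⟩, ⟨a.2.val, lt_of_lt_of_le a.2.isLt hmC⟩)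
    with hinc_def
  have hinc_inj : Function.Injective inc := by
    intro a b h
    have e0 : (⟨a.1.val, lt_of_lt_of_le a.1.isLt hmB⟩ : Fin dB)
        = ⟨b.1.val, lt_of_lt_of_le b.1.isLt hmB⟩ := congrArg Prod.fst h
    have e0' : (⟨a.2.val, lt_of_lt_of_le a.2.isLt hmC⟩ : Fin dC)
        = ⟨b.2.val, lt_of_lt_of_le b.2.isLt hmC⟩ := congrArg Prod.snd h
    have e1v := congrArg Fin.val e0
    have e2v := congrArg Fin.val e0'
    exact Prod.ext (Fin.ext e1v) (Fin.ext e2v)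
  have hPinc : ∀ a : Fin m × Fin m, (inc a).1.val < m ∧ (inc a).2.val < m := fun a =>
    ⟨a.1.isLt, a.2.isLt⟩
  have hfilter : Finset.univ.val.filter (fun p : Fin dB × Fin dC => p.1.val < m ∧ p.2.val < m)
      = Multiset.map inc Finset.univ.val := by
    rw [Multiset.Nodup.ext (Multiset.Nodup.filter _ Finset.univ.nodup)
      (Multiset.Nodup.map hinc_inj Finset.univ.nodup)]
    intro x
    rw [Multiset.mem_filter, Multiset.mem_map]
    constructor
    · rintro ⟨-, hx⟩
      refine ⟨(⟨x.1.val, hx.1⟩, ⟨x.2.val, hx.2⟩), Finset.mem_univ _, ?_⟩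
      refine Prod.ext (Fin.ext ?_) (Fin.ext ?_) <;> rfl
    · rintro ⟨a, -, rfl⟩
      exact ⟨Finset.mem_univ _, hPinc a⟩
  have hDinc : ∀ a : Fin m × Fin m, D (inc a) = lam a := by
    intro a
    rw [hD_def]
    simp only
    rw [dif_pos (hPinc a)]
  have hsplit := Multiset.filter_add_not
    (fun p : Fin dB × Fin dC => p.1.val < m ∧ p.2.val < m) Finset.univ.val
  have hcard_filter : Multiset.card (Finset.univ.val.filter
      (fun p : Fin dB × Fin dC => p.1.val < m ∧ p.2.val < m)) = m ^ 2 := by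
    rw [hfilter, Multiset.card_map]
    simp [sq]
  have hzero : Multiset.map D (Finset.univ.val.filter
      (fun p : Fin dB × Fin dC => ¬(p.1.val < m ∧ p.2.val < m)))
      = Multiset.replicate (dB * dC - m ^ 2) (0 : ℝ) := by
    have hconst : ∀ x ∈ Finset.univ.val.filter
        (fun p : Fin dB × Fin dC => ¬(p.1.val < m ∧ p.2.val < m)), D x = (fun _ => (0:ℝ)) x := by
      intro x hx
      rw [Multiset.mem_filter] at hx
      rw [hD_def]
      simp only
      rw [dif_neg hx.2]
    rw [Multiset.map_congr rfl hconst, Multiset.map_const']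
    congr 1
    have htot := congrArg Multiset.card hsplit
    rw [Multiset.card_add, hcard_filter] at htot
    have huniv : Multiset.card (Finset.univ.val : Multiset (Fin dB × Fin dC)) = dB * dC := by
      simp
    rw [huniv] at htot
    omega
  -- split the m × m square
  have t1 := Multiset.filter_add_not
    (fun a : Fin m × Fin m => a.1 = a.2) Finset.univ.val
  have t2 := Multiset.filter_add_not
    (fun a : Fin m × Fin m => a.1 < a.2)
    (Finset.univ.val.filter (fun a : Fin m × Fin m => ¬ a.1 = a.2))
  have hfe : (Finset.univ.val.filter (fun a : Fin m × Fin m => ¬ a.1 = a.2)).filter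
      (fun a : Fin m × Fin m => a.1 < a.2)
      = Finset.univ.val.filter (fun a : Fin m × Fin m => a.1 < a.2) := by
    rw [Multiset.filter_filter]
    apply Multiset.filter_congr
    intro x _
    constructor
    · rintro ⟨h, -⟩; exact h
    · intro h; exact ⟨h, ne_of_lt h⟩
  have hfg : (Finset.univ.val.filter (fun a : Fin m × Fin m => ¬ a.1 = a.2)).filter
      (fun a : Fin m × Fin m => ¬ a.1 < a.2)
      = Finset.univ.val.filter (fun a : Fin m × Fin m => a.2 < a.1) := by
    rw [Multiset.filter_filter]
    apply Multiset.filter_congr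
    intro x _
    constructor
    · rintro ⟨h1, h2⟩
      rcases lt_trichotomy x.1 x.2 with h | h | h
      · exact absurd h h1
      · exact absurd h h2
      · exact h
    · intro h; exact ⟨not_lt_of_gt h, ne_of_gt h⟩
  have hsq_split : (Finset.univ.val : Multiset (Fin m × Fin m))
      = Finset.univ.val.filter (fun a : Fin m × Fin m => a.1 = a.2)
        + Finset.univ.val.filter (fun a : Fin m × Fin m => a.1 < a.2)
        + Finset.univ.val.filter (fun a : Fin m × Fin m => a.2 < a.1) := by
    conv_lhs => rw [← t1]
    rw [add_assoc]
    congr 1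
    conv_lhs => rw [← t2]
    rw [hfe, hfg]
  -- the three pieces
  have hdiag : Multiset.map lam (Finset.univ.val.filter (fun a : Fin m × Fin m => a.1 = a.2))
      = Finset.univ.val.map (fun k : Fin m => s k ^ 2) := by
    have hd2 : Finset.univ.val.filter (fun a : Fin m × Fin m => a.1 = a.2)
        = Multiset.map (fun k : Fin m => (k, k)) Finset.univ.val := by
      rw [Multiset.Nodup.ext (Multiset.Nodup.filter _ Finset.univ.nodup)
        (Multiset.Nodup.map (fun x y h => congrArg Prod.fst h) Finset.univ.nodup)]
      intro x
      rw [Multiset.mem_filter, Multiset.mem_map]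
      constructor
      · rintro ⟨-, hx⟩
        exact ⟨x.1, Finset.mem_univ_val _, Prod.ext rfl hx⟩
      · rintro ⟨k, -, rfl⟩
        exact ⟨Finset.mem_univ _, rfl⟩
    rw [hd2, Multiset.map_map]
    apply Multiset.map_congr rfl
    intro k _
    rw [hlam_def]
    simp
  have hltpiece : Multiset.map lam
      (Finset.univ.val.filter (fun a : Fin m × Fin m => a.1 < a.2))
      = (Finset.univ.filter (fun p : Fin m × Fin m => p.1 < p.2)).val.map
          (fun p : Fin m × Fin m => s p.1 * s p.2) := by
    rw [Finset.filter_val]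
    apply Multiset.map_congr rfl
    intro x hx
    rw [Multiset.mem_filter] at hx
    rw [hlam_def]
    simp only
    rw [if_neg (ne_of_lt hx.2), if_pos hx.2]
  have hgtpiece : Multiset.map lam
      (Finset.univ.val.filter (fun a : Fin m × Fin m => a.2 < a.1))
      = (Finset.univ.filter (fun p : Fin m × Fin m => p.1 < p.2)).val.map
          (fun p : Fin m × Fin m => -(s p.1 * s p.2)) := by
    have hswapf : Finset.univ.val.filter (fun a : Fin m × Fin m => a.2 < a.1)
        = Multiset.map Prod.swap
            (Finset.univ.val.filter (fun a : Fin m × Fin m => a.1 < a.2)) := by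
      rw [Multiset.Nodup.ext (Multiset.Nodup.filter _ Finset.univ.nodup)
        (Multiset.Nodup.map Prod.swap_injective
          (Multiset.Nodup.filter _ Finset.univ.nodup))]
      intro x
      rw [Multiset.mem_filter, Multiset.mem_map]
      constructor
      · rintro ⟨-, hx⟩
        refine ⟨(x.2, x.1), ?_, rfl⟩
        rw [Multiset.mem_filter]
        exact ⟨Finset.mem_univ _, hx⟩
      · rintro ⟨a, ha, rfl⟩
        rw [Multiset.mem_filter] at ha
        exact ⟨Finset.mem_univ _, ha.2⟩
    rw [hswapf, Multiset.map_map, Finset.filter_val]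
    apply Multiset.map_congr rfl
    intro x hx
    rw [Multiset.mem_filter] at hx
    rw [hlam_def]
    simp only [Function.comp_apply, Prod.fst_swap, Prod.snd_swap]
    rw [if_neg (ne_of_gt hx.2), if_neg (not_lt_of_gt hx.2)]
    ring
  -- assemble
  calc Multiset.map D Finset.univ.val
      = Multiset.map D (Finset.univ.val.filter
          (fun p : Fin dB × Fin dC => p.1.val < m ∧ p.2.val < m))
        + Multiset.map D (Finset.univ.val.filter
          (fun p : Fin dB × Fin dC => ¬(p.1.val < m ∧ p.2.val < m))) := by
        rw [← Multiset.map_add, hsplit]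
    _ = Multiset.map lam (Finset.univ.val : Multiset (Fin m × Fin m))
        + Multiset.replicate (dB * dC - m ^ 2) (0 : ℝ) := by
        rw [hzero, hfilter, Multiset.map_map]
        congr 1
        exact Multiset.map_congr rfl (fun a _ => hDinc a)
    _ = _ := by
        rw [hsq_split, Multiset.map_add, Multiset.map_add, hdiag, hltpiece, hgtpiece]

end
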